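/- Let q = 7 and identify F with Z/7Z. Let x = (0,1,1,1,1,1,1,1), y = (1,0,1,3,2,6,4,5), z′ = (1,2,6,1,4,3,5,0) in F^8, and set P = ⟨x⟩, Q = ⟨y⟩, T′ = ⟨z′⟩. Then P and Q are collinear simplex points, T′ is a simplex point collinear to both P and Q, T′ does not lie on the line ⟨P,Q⟩, and T′ does not belong to I(⟨I(P), I(Q)⟩) (the image under the inversion I of the set of 1-dimensional subspaces of the simplex line through I(P) and I(Q)). In particular, for q = 7 the set I(⟨I(P), I(Q)⟩) \ {P,Q} is not the full set of simplex points collinear to both P and Q and off the line ⟨P,Q⟩. -/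

import Mathlib

open Submodule Module

/-- All columns of the 2×n matrix with rows `x` and `y` are nonzero and pairwise
non-proportional (equivalently, every 2×2 minor is nonzero). -/
def GoodPair {F : Type} [Field F] {n : ℕ} (x y : Fin n → F) : Prop :=
  ∀ i j : Fin n, i ≠ j → x i * y j ≠ x j * y i

/-- A simplex line: a 2-dimensional subspace spanned by the rows of a generator
matrix all of whose columns are nonzero and pairwise non-proportional. -/
def IsSimplexLine {F : Type} [Field F] {n : ℕ} (C : Submodule F (Fin n → F)) : Prop :=
  ∃ x y : Fin n → F, GoodPair x y ∧ C = span F {x, y}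

/-- A simplex point: a 1-dimensional subspace spanned by a vector with exactly
one zero coordinate. -/
def IsSimplexPoint {F : Type} [Field F] {n : ℕ} (P : Submodule F (Fin n → F)) : Prop :=
  ∃ x : Fin n → F, (∃! i, x i = 0) ∧ P = span F {x}

/-- Two simplex points are collinear: they are spanned by the two rows of a
generator matrix of a simplex code, i.e. there is a simplex line containing both. -/
def PtCollinear {F : Type} [Field F] {n : ℕ} (P Q : Submodule F (Fin n → F)) : Prop :=
  ∃ x y : Fin n → F, GoodPair x y ∧ P = span F {x} ∧ Q = span F {y}

/-- A clique of the graph Γ of simplex lines: all members are simplex lines and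
any two distinct members intersect in a 1-dimensional subspace. -/
def IsGammaClique {F : Type} [Field F] {n : ℕ} (T : Set (Submodule F (Fin n → F))) : Prop :=
  (∀ L ∈ T, IsSimplexLine L) ∧
    ∀ L ∈ T, ∀ L' ∈ T, L ≠ L' → finrank F ↥(L ⊓ L') = 1

/-- A top of Γ: a maximal clique of Γ consisting of all simplex lines contained
in a fixed 3-dimensional subspace (projective plane). -/
def IsGammaTop {F : Type} [Field F] {n : ℕ} (T : Set (Submodule F (Fin n → F))) : Prop :=
  IsGammaClique T ∧ (∀ T' : Set (Submodule F (Fin n → F)), IsGammaClique T' → T ⊆ T' → T' = T) ∧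
    ∃ W : Submodule F (Fin n → F), finrank F ↥W = 3 ∧
      T = {L | IsSimplexLine L ∧ L ≤ W}

/-- A monomial linear automorphism: `x ↦ (a₁ x_{σ(1)}, …, aₙ x_{σ(n)})` with all
`aᵢ` nonzero and `σ` a permutation. -/
def IsMonomial {F : Type} [Field F] {n : ℕ} (l : (Fin n → F) ≃ₗ[F] (Fin n → F)) : Prop :=
  ∃ (a : Fin n → F) (σ : Equiv.Perm (Fin n)),
    (∀ i, a i ≠ 0) ∧ ∀ (x : Fin n → F) (i : Fin n), l x i = a i * x (σ i)

/-- Coordinatewise inversion `I` (with `0⁻¹ = 0`). -/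
def vecInv {F : Type} [Field F] {n : ℕ} (x : Fin n → F) : Fin n → F := fun i => (x i)⁻¹

instance : Fact (Nat.Prime 7) := ⟨by norm_num⟩

/-- The row vector x = (0,1,1,1,1,1,1,1) over F₇. -/
def xv : Fin 8 → ZMod 7 := ![0, 1, 1, 1, 1, 1, 1, 1]

/-- The row vector y = (1,0,1,3,2,6,4,5) over F₇. -/
def yv : Fin 8 → ZMod 7 := ![1, 0, 1, 3, 2, 6, 4, 5]

/-- The row vector z′ = (1,2,6,1,4,3,5,0) over F₇. -/
def zv : Fin 8 → ZMod 7 := ![1, 2, 6, 1, 4, 3, 5, 0]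

/-- For q = 7: with P = ⟨x⟩, Q = ⟨y⟩, T′ = ⟨z′⟩ as above, P and Q are collinear
simplex points, T′ is a simplex point collinear to both P and Q, T′ is not on the
line ⟨P,Q⟩, and T′ does not belong to I(⟨I(P),I(Q)⟩); so for q = 7 the set
I(⟨I(P),I(Q)⟩) \ {P,Q} is not the full set of simplex points collinear to both
P, Q and off the line ⟨P,Q⟩. -/
theorem q7_counterexample :
    IsSimplexPoint (span (ZMod 7) {xv}) ∧ IsSimplexPoint (span (ZMod 7) {yv}) ∧
    PtCollinear (span (ZMod 7) {xv}) (span (ZMod 7) {yv}) ∧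
    IsSimplexPoint (span (ZMod 7) {zv}) ∧
    PtCollinear (span (ZMod 7) {zv}) (span (ZMod 7) {xv}) ∧
    PtCollinear (span (ZMod 7) {zv}) (span (ZMod 7) {yv}) ∧
    ¬ span (ZMod 7) {zv} ≤ span (ZMod 7) {xv, yv} ∧
    span (ZMod 7) {zv} ∉
      {R : Submodule (ZMod 7) (Fin 8 → ZMod 7) |
        ∃ w : Fin 8 → ZMod 7, w ≠ 0 ∧ w ∈ span (ZMod 7) {vecInv xv, vecInv yv} ∧
          R = span (ZMod 7) {vecInv w}} := by
  refine ⟨⟨xv, by unfold ExistsUnique; decide, rfl⟩, ⟨yv, by unfold ExistsUnique; decide, rfl⟩, ⟨xv, yv, by unfold GoodPair; decide, rfl, rfl⟩,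
    ⟨zv, by unfold ExistsUnique; decide, rfl⟩, ⟨zv, xv, by unfold GoodPair; decide, rfl, rfl⟩, ⟨zv, yv, by unfold GoodPair; decide, rfl, rfl⟩, ?_, ?_⟩
  · intro h
    have hz : zv ∈ span (ZMod 7) {xv, yv} := h (mem_span_singleton_self zv)
    rw [mem_span_pair] at hz
    obtain ⟨a, b, hab⟩ := hz
    have h0 := congrFun hab 0
    have h1 := congrFun hab 1
    have h2 := congrFun hab 2
    simp [xv, yv, zv] at h0 h1 h2
    subst h0 h1
    exact absurd h2 (by decide)
  · rintro ⟨w, hw0, hwmem, hR⟩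
    have hz : zv ∈ span (ZMod 7) {vecInv w} := hR ▸ mem_span_singleton_self zv
    rw [mem_span_singleton] at hz
    obtain ⟨c, hc⟩ := hz
    rw [mem_span_pair] at hwmem
    obtain ⟨a, b, hab⟩ := hwmem
    have e0 := congrFun hc 0
    have e2 := congrFun hc 2
    have e7 := congrFun hc 7
    have f0 := congrFun hab 0
    have f2 := congrFun hab 2
    have f7 := congrFun hab 7
    simp [xv, yv, zv, vecInv] at e0 e2 e7 f0 f2 f7
    rw [show ((5 : ZMod 7))⁻¹ = 3 from inv_eq_of_mul_eq_one_right (by decide)] at f7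
    simp only [← f0, ← f2, ← f7] at e0 e2 e7
    have hb : b ≠ 0 := by rintro rfl; rw [inv_zero, mul_zero] at e0; exact one_ne_zero e0.symm
    have hcb : c = b := (mul_inv_eq_one₀ hb).mp e0
    have hcne : c ≠ 0 := hcb ▸ hb
    have h7 : a + b * 3 = 0 := e7.resolve_left hcne
    rcases eq_or_ne (a + b) 0 with hab0 | hab0
    · rw [hab0, inv_zero, mul_zero] at e2
      exact absurd e2 (by decide)
    · have h2 : c = 6 * (a + b) := by
        field_simp [hab0] at e2
        rw [mul_comm] at e2
        exact e2
      clear e0 e2 e7 f0 f2 f7 hc hab hR hw0 hcne hab0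
      revert a b c
      decide
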